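/- Let X_1,...,X_n be positive random variables, jointly continuously distributed, where X_k has absolutely continuous marginal distribution function F_k. If t = t(n,s) is the unique solution of Σ_{k=1}^n ∫_0^t x dF_k(x) = s, then E[N(n,s)] ≤ Σ_{k=1}^n F_k(t). -/

import Mathlib

open MeasureTheory ProbabilityTheory Finset Set
open scoped Classical

/-- Generalized BRS-inequality (Steele 2016, Theorem 2): for positive,
possibly dependent random variables `X k` with absolutely continuous marginal
distribution functions `F k`, if `t` solves `∑ k, ∫_0^t x dF_k(x) = s`, then
`E[N(n,s)] ≤ ∑ k, F k t`. -/
theorem brs_inequality_general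
    {Ω : Type*} [MeasureSpace Ω] [IsProbabilityMeasure (ℙ : Measure Ω)]
    (n : ℕ) (s t : ℝ) (hs : 0 < s) (ht : 0 < t)
    (X : Fin n → Ω → ℝ) (hXmeas : ∀ k, Measurable (X k))
    (hXpos : ∀ k ω, 0 < X k ω)
    (F : Fin n → ℝ → ℝ)
    (hF : ∀ k x, F k x = ((Measure.map (X k) ℙ) (Iic x)).toReal)
    (hBRS : ∑ k : Fin n, ∫ x in Ioc (0:ℝ) t, x ∂(Measure.map (X k) ℙ) = s)
    (N : Ω → ℕ)
    (hN : ∀ ω, N ω = ((Finset.univ.powerset.filter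
      (fun A : Finset (Fin n) => ∑ i ∈ A, X i ω ≤ s)).sup Finset.card)) :
    ∫ ω, (N ω : ℝ) ≤ ∑ k : Fin n, F k t := by
  -- the two families of bounded functions
  have hg1eq : ∀ k : Fin n, (fun ω => if X k ω ≤ t then (1:ℝ) else 0)
      = fun ω => ((X k) ⁻¹' (Iic t)).indicator (fun _ => (1:ℝ)) ω := by
    intro k; funext ω; simp [Set.indicator_apply]
  have hg2eq : ∀ (k : Fin n) (ω : Ω), (if X k ω ≤ t then X k ω else 0)
      = (Ioc (0:ℝ) t).indicator id (X k ω) := by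
    intro k ω
    by_cases h : X k ω ≤ t
    · simp [h, Set.indicator_of_mem, Set.mem_Ioc, hXpos k ω]
    · simp [h, Set.indicator_of_notMem, Set.mem_Ioc]
  have hmeas2 : ∀ k : Fin n, Measurable (fun ω => if X k ω ≤ t then X k ω else 0) := by
    intro k
    have : (fun ω => if X k ω ≤ t then X k ω else 0)
        = ((Ioc (0:ℝ) t).indicator id) ∘ (X k) := funext fun ω => hg2eq k ω
    rw [this]
    exact (measurable_id.indicator measurableSet_Ioc).comp (hXmeas k)
  have hint1 : ∀ k : Fin n, Integrable (fun ω => if X k ω ≤ t then (1:ℝ) else 0) ℙ := by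
    intro k
    rw [hg1eq k]
    exact (integrable_const (1:ℝ)).indicator ((hXmeas k) measurableSet_Iic)
  have hint2 : ∀ k : Fin n, Integrable (fun ω => if X k ω ≤ t then X k ω else 0) ℙ := by
    intro k
    refine Integrable.mono' (integrable_const t) (hmeas2 k).aestronglyMeasurable ?_
    refine Filter.Eventually.of_forall fun ω => ?_
    by_cases h : X k ω ≤ t
    · simp only [h, if_pos]
      rw [Real.norm_eq_abs, abs_of_nonneg (hXpos k ω).le]
      exact h
    · simp [h, ht.le]
  have hint2' : Integrable (fun ω => s - ∑ k : Fin n, (if X k ω ≤ t then X k ω else 0)) ℙ :=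
    (integrable_const s).sub (integrable_finset_sum _ fun k _ => hint2 k)
  have hI1 : ∀ k : Fin n, (∫ ω, (if X k ω ≤ t then (1:ℝ) else 0)) = F k t := by
    intro k
    rw [hg1eq k, integral_indicator ((hXmeas k) measurableSet_Iic), setIntegral_const]
    simp [hF, Measure.map_apply (hXmeas k) measurableSet_Iic]
    rfl
  have hI2 : ∀ k : Fin n, (∫ ω, (if X k ω ≤ t then X k ω else 0))
      = ∫ x in Ioc (0:ℝ) t, x ∂(Measure.map (X k) ℙ) := by
    intro k
    have h2 : (∫ x in Ioc (0:ℝ) t, x ∂(Measure.map (X k) ℙ))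
        = ∫ ω, ((Ioc (0:ℝ) t).indicator (fun x => x)) (X k ω) := by
      rw [← integral_indicator measurableSet_Ioc]
      exact integral_map (hXmeas k).aemeasurable
        ((measurable_id.indicator measurableSet_Ioc).aestronglyMeasurable)
    rw [h2]
    congr 1; funext ω
    exact hg2eq k ω
  -- the dominating function
  set f : Ω → ℝ := fun ω => (∑ k : Fin n, (if X k ω ≤ t then (1:ℝ) else 0))
      + (1/t) * (s - ∑ k : Fin n, (if X k ω ≤ t then X k ω else 0)) with hfdef
  have hintf : Integrable f ℙ := by
    exact (integrable_finset_sum _ fun k _ => hint1 k).add (hint2'.const_mul _)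
  have hIf : ∫ ω, f ω = ∑ k : Fin n, F k t := by
    rw [hfdef]
    rw [integral_add (integrable_finset_sum _ fun k _ => hint1 k) (hint2'.const_mul _),
      integral_finset_sum _ fun k _ => hint1 k, integral_const_mul,
      integral_sub (integrable_const s) (integrable_finset_sum _ fun k _ => hint2 k),
      integral_finset_sum _ fun k _ => hint2 k]
    simp only [hI1, hI2]
    rw [hBRS]
    simp
  -- pointwise inequality
  have hpt : ∀ ω, (N ω : ℝ) ≤ f ω := by
    intro ω
    rw [hN ω]
    obtain ⟨A, hA, hcard⟩ := Finset.exists_mem_eq_sup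
      (Finset.univ.powerset.filter (fun A : Finset (Fin n) => ∑ i ∈ A, X i ω ≤ s))
      ⟨∅, by simp [hs.le]⟩ Finset.card
    rw [hcard]
    have hAs : ∑ i ∈ A, X i ω ≤ s := (Finset.mem_filter.mp hA).2
    have key : ∑ k ∈ A, (t - X k ω)
        ≤ ∑ k : Fin n, (t - X k ω) * (if X k ω ≤ t then (1:ℝ) else 0) := by
      have h0 : ∑ k ∈ A, (t - X k ω)
          = ∑ k : Fin n, (if k ∈ A then t - X k ω else 0) := by
        rw [Finset.sum_ite_mem, Finset.univ_inter]
      rw [h0]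
      apply Finset.sum_le_sum
      intro k _
      by_cases hk : X k ω ≤ t
      · rw [if_pos hk, mul_one]
        by_cases hkA : k ∈ A
        · simp [hkA]
        · simp [hkA, sub_nonneg.mpr hk]
      · rw [if_neg hk, mul_zero]
        by_cases hkA : k ∈ A
        · simp only [if_pos hkA]
          linarith [not_le.mp hk]
        · simp [hkA]
    have expand : ∑ k : Fin n, (t - X k ω) * (if X k ω ≤ t then (1:ℝ) else 0)
        = t * (∑ k : Fin n, (if X k ω ≤ t then (1:ℝ) else 0))
          - ∑ k : Fin n, (if X k ω ≤ t then X k ω else 0) := by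
      rw [Finset.mul_sum, ← Finset.sum_sub_distrib]
      apply Finset.sum_congr rfl
      intro k _
      by_cases hk : X k ω ≤ t <;> simp [hk]
    have h1 : t * (A.card : ℝ) = ∑ k ∈ A, (t - X k ω) + ∑ k ∈ A, X k ω := by
      rw [← Finset.sum_add_distrib]
      simp [mul_comm]
    have hmain : t * (A.card : ℝ)
        ≤ t * (∑ k : Fin n, (if X k ω ≤ t then (1:ℝ) else 0))
          + (s - ∑ k : Fin n, (if X k ω ≤ t then X k ω else 0)) := by
      rw [h1]
      have := key.trans_eq expand
      linarith
    have h2 : (A.card : ℝ)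
        ≤ (t * (∑ k : Fin n, (if X k ω ≤ t then (1:ℝ) else 0))
            + (s - ∑ k : Fin n, (if X k ω ≤ t then X k ω else 0))) / t := by
      rw [le_div_iff₀ ht]
      linarith
    have h3 : (t * (∑ k : Fin n, (if X k ω ≤ t then (1:ℝ) else 0))
            + (s - ∑ k : Fin n, (if X k ω ≤ t then X k ω else 0))) / t
        = (∑ k : Fin n, (if X k ω ≤ t then (1:ℝ) else 0))
          + (1/t) * (s - ∑ k : Fin n, (if X k ω ≤ t then X k ω else 0)) := by
      field_simp
    rw [hfdef]
    calc (A.card : ℝ) ≤ _ := h2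
      _ = _ := h3
  calc ∫ ω, (N ω : ℝ)
      ≤ ∫ ω, f ω := integral_mono_of_nonneg
        (Filter.Eventually.of_forall fun ω => by positivity) hintf
        (Filter.Eventually.of_forall hpt)
    _ = ∑ k : Fin n, F k t := hIf
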